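/- Let G be a simple connected graph with diameter 2 and let x be a vertex of G. Let p be a pebble distribution on G of size m with m ≥ 5. If x is not reachable from p, then G has at least ⌊((m − 5)² + 3)/2⌋ vertices. -/

import Mathlib

open Finset

variable {V : Type*}

/-- A pebbling move: remove two pebbles at a vertex `v` and add one pebble at an
adjacent vertex `u`. -/
def IsPebblingMove (G : SimpleGraph V) (p p' : V → ℕ) : Prop :=
  ∃ v u, G.Adj v u ∧ 2 ≤ p v ∧
    p' v = p v - 2 ∧ p' u = p u + 1 ∧ ∀ z, z ≠ v → z ≠ u → p' z = p z

/-- A strict rubbling move: remove one pebble each at distinct vertices `v` and `w`,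
both adjacent to `u`, and add one pebble at `u`. -/
def IsStrictRubblingMove (G : SimpleGraph V) (p p' : V → ℕ) : Prop :=
  ∃ v w u, v ≠ w ∧ G.Adj v u ∧ G.Adj w u ∧ 1 ≤ p v ∧ 1 ≤ p w ∧
    p' v = p v - 1 ∧ p' w = p w - 1 ∧ p' u = p u + 1 ∧
    ∀ z, z ≠ v → z ≠ w → z ≠ u → p' z = p z

/-- A rubbling move is a pebbling move or a strict rubbling move. -/
def IsRubblingMove (G : SimpleGraph V) (p p' : V → ℕ) : Prop :=
  IsPebblingMove G p p' ∨ IsStrictRubblingMove G p p'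

/-- A vertex `x` is reachable from the pebble distribution `p` if some executable
sequence of rubbling moves leads to a distribution with a pebble on `x`. -/
def RubblingReachable (G : SimpleGraph V) (p : V → ℕ) (x : V) : Prop :=
  ∃ q : V → ℕ, Relation.ReflTransGen (IsRubblingMove G) p q ∧ 1 ≤ q x

/-- The rubbling number: the least `m` such that every vertex is reachable from
every pebble distribution of size `m`. -/
noncomputable def rubblingNumber (G : SimpleGraph V) [Fintype V] : ℕ :=
  sInf {m | ∀ p : V → ℕ, ∑ v, p v = m → ∀ x, RubblingReachable G p x}

/-- The optimal rubbling number: the least size of a pebble distribution from which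
every vertex is reachable. -/
noncomputable def optimalRubblingNumber (G : SimpleGraph V) [Fintype V] : ℕ :=
  sInf {m | ∃ p : V → ℕ, ∑ v, p v = m ∧ ∀ x, RubblingReachable G p x}

namespace RubblingAux

variable [DecidableEq V]
set_option linter.unusedSectionVars false

/-- result of a pebbling move -/
def movep (p : V → ℕ) (v u : V) : V → ℕ :=
  fun z => if z = v then p v - 2 else if z = u then p u + 1 else p z

/-- result of a strict rubbling move -/
def mover (p : V → ℕ) (v w u : V) : V → ℕ :=
  fun z => if z = v then p v - 1 else if z = w then p w - 1 else
    if z = u then p u + 1 else p z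

def Sends (G : SimpleGraph V) (p q : V → ℕ) : Prop :=
  Relation.ReflTransGen (IsRubblingMove G) p q

lemma sends_refl (G : SimpleGraph V) (p : V → ℕ) : Sends G p p :=
  Relation.ReflTransGen.refl

lemma sends_trans {G : SimpleGraph V} {p q r : V → ℕ} (h1 : Sends G p q)
    (h2 : Sends G q r) : Sends G p r := Relation.ReflTransGen.trans h1 h2

lemma sends_movep {G : SimpleGraph V} {p : V → ℕ} {v u : V} (h : G.Adj v u)
    (h2 : 2 ≤ p v) : Sends G p (movep p v u) := by
  refine Relation.ReflTransGen.single (Or.inl ⟨v, u, h, h2, ?_, ?_, ?_⟩)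
  · simp [movep]
  · simp [movep, h.ne']
  · intro z hzv hzu; simp [movep, hzv, hzu]

lemma sends_mover {G : SimpleGraph V} {p : V → ℕ} {v w u : V} (hvw : v ≠ w)
    (hv : G.Adj v u) (hw : G.Adj w u) (h1 : 1 ≤ p v) (h2 : 1 ≤ p w) :
    Sends G p (mover p v w u) := by
  refine Relation.ReflTransGen.single (Or.inr ⟨v, w, u, hvw, hv, hw, h1, h2, ?_, ?_, ?_, ?_⟩)
  · simp [mover]
  · simp [mover, hvw.symm]
  · simp [mover, hv.ne', hw.ne']
  · intro z hzv hzw hzu; simp [mover, hzv, hzw, hzu]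

lemma reach_of_sends {G : SimpleGraph V} {p q : V → ℕ} {x : V} (h : Sends G p q)
    (hr : RubblingReachable G q x) : RubblingReachable G p x := by
  obtain ⟨r, hqr, hrx⟩ := hr
  exact ⟨r, sends_trans h hqr, hrx⟩

/-- two pebbles on a neighbor of x reach x -/
lemma reach_two {G : SimpleGraph V} {p : V → ℕ} {x y : V} (hy : G.Adj y x)
    (h2 : 2 ≤ p y) : RubblingReachable G p x := by
  refine ⟨movep p y x, sends_movep hy h2, ?_⟩
  simp [movep, hy.ne']

/-- one pebble each on two distinct neighbors of x reach x -/
lemma reach_one_one {G : SimpleGraph V} {p : V → ℕ} {x y y' : V} (hyy' : y ≠ y')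
    (hy : G.Adj y x) (hy' : G.Adj y' x) (h1 : 1 ≤ p y) (h1' : 1 ≤ p y') :
    RubblingReachable G p x := by
  refine ⟨mover p y y' x, sends_mover hyy' hy hy' h1 h1', ?_⟩
  simp [mover, hy.ne', hy'.ne']


/-- delivery: from any distribution with a pebble on each element of `S`, we can
move an extra pebble onto some neighbor of `x`, not consuming pebbles outside `S`. -/
def Del (G : SimpleGraph V) (x : V) (S : Finset V) : Prop :=
  ∀ p : V → ℕ, (∀ s ∈ S, 1 ≤ p s) →
    ∃ q y, G.Adj y x ∧ Sends G p q ∧ p y + 1 ≤ q y ∧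
      ∀ v, v ∉ S → v ≠ y → p v ≤ q v

lemma reach_of_pebbleN_del {G : SimpleGraph V} {x y₀ : V} {S : Finset V} {p : V → ℕ}
    (hy₀x : G.Adj y₀ x) (hp₀ : 1 ≤ p y₀) (hS : Del G x S)
    (hSN : ∀ s ∈ S, ¬ G.Adj s x) (hpS : ∀ s ∈ S, 1 ≤ p s) :
    RubblingReachable G p x := by
  obtain ⟨q, y, hyx, hsend, hqy, hq⟩ := hS p hpS
  refine reach_of_sends hsend ?_
  by_cases hyy : y = y₀
  · exact reach_two hy₀x (by subst hyy; omega)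
  · have hy₀S : y₀ ∉ S := fun h => hSN y₀ h hy₀x
    exact reach_one_one hyy hyx hy₀x (by omega)
      (le_trans hp₀ (hq y₀ hy₀S (fun h => hyy h.symm)))

lemma reach_two_dels {G : SimpleGraph V} {x : V} {S₁ S₂ : Finset V} {p : V → ℕ}
    (h1 : Del G x S₁) (h2 : Del G x S₂) (hd : Disjoint S₁ S₂)
    (hS₁ : ∀ s ∈ S₁, ¬ G.Adj s x) (hS₂ : ∀ s ∈ S₂, ¬ G.Adj s x)
    (hp : ∀ s ∈ S₁ ∪ S₂, 1 ≤ p s) : RubblingReachable G p x := by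
  obtain ⟨q, y, hyx, hsend, hqy, hq⟩ := h1 p (fun s hs => hp s (mem_union_left _ hs))
  refine reach_of_sends hsend ?_
  refine reach_of_pebbleN_del hyx (by omega) h2 hS₂ ?_
  intro s hs
  have hsy : s ≠ y := fun h => hS₂ s hs (h ▸ hyx)
  have hs1 : s ∉ S₁ := fun h => (Finset.disjoint_left.mp hd h) hs
  exact le_trans (hp s (mem_union_right _ hs)) (hq s hs1 hsy)

lemma del_pair {G : SimpleGraph V} {x a b y : V} (hab : a ≠ b) (hay : G.Adj a y)
    (hby : G.Adj b y) (hyx : G.Adj y x) : Del G x {a, b} := by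
  intro p hp
  refine ⟨mover p a b y, y, hyx,
    sends_mover hab hay hby (hp a (by simp)) (hp b (by simp)), ?_, ?_⟩
  · simp [mover, hay.ne, hay.ne', hby.ne, hby.ne']
  · intro v hv hvy
    simp only [mem_insert, mem_singleton, not_or] at hv
    simp [mover, hv.1, hv.2, hvy]

lemma del_cherry {G : SimpleGraph V} {x a b s y : V} (hab : a ≠ b) (has : G.Adj a s)
    (hbs : G.Adj b s) (hsy : G.Adj s y) (hyx : G.Adj y x) (hya : y ≠ a) (hyb : y ≠ b) :
    Del G x {a, b, s} := by
  intro p hp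
  have hps : 1 ≤ p s := hp s (by simp)
  set q1 := mover p a b s with hq1
  have h1 : Sends G p q1 := sends_mover hab has hbs (hp a (by simp)) (hp b (by simp))
  have hq1s : q1 s = p s + 1 := by simp [hq1, mover, has.ne, has.ne', hbs.ne, hbs.ne']
  have h2 : Sends G q1 (movep q1 s y) := sends_movep hsy (by omega)
  refine ⟨movep q1 s y, y, hyx, sends_trans h1 h2, ?_, ?_⟩
  · have hy : q1 y = p y := by
      simp [hq1, mover, hya, hyb, Ne.symm hya, Ne.symm hyb, hsy.ne, hsy.ne']
    simp [movep, hsy.ne, hsy.ne', hy]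
  · intro v hv hvy
    simp only [mem_insert, mem_singleton, not_or] at hv
    simp [movep, mover, hq1, hv.1, hv.2.1, hv.2.2, hvy]

lemma del_four {G : SimpleGraph V} {x a b c d z y : V} (hab : a ≠ b) (hcd : c ≠ d)
    (hca : c ≠ a) (hcb : c ≠ b) (hda : d ≠ a) (hdb : d ≠ b)
    (haz : G.Adj a z) (hbz : G.Adj b z) (hcz : G.Adj c z) (hdz : G.Adj d z)
    (hzy : G.Adj z y) (hyx : G.Adj y x)
    (hya : y ≠ a) (hyb : y ≠ b) (hyc : y ≠ c) (hyd : y ≠ d) :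
    Del G x {a, b, c, d} := by
  intro p hp
  set q1 := mover p a b z with hq1
  have h1 : Sends G p q1 := sends_mover hab haz hbz (hp a (by simp)) (hp b (by simp))
  have hq1c : q1 c = p c := by simp [hq1, mover, hca, hcb, hcz.ne]
  have hq1d : q1 d = p d := by simp [hq1, mover, hda, hdb, hdz.ne]
  set q2 := mover q1 c d z with hq2
  have h2 : Sends G q1 q2 := sends_mover hcd hcz hdz (by rw [hq1c]; exact hp c (by simp))
    (by rw [hq1d]; exact hp d (by simp))
  have hq2z : q2 z = p z + 2 := by
    simp [hq2, hq1, mover, hcz.ne, hcz.ne', hdz.ne, hdz.ne', haz.ne, haz.ne',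
      hbz.ne, hbz.ne']
  have h3 : Sends G q2 (movep q2 z y) := sends_movep hzy (by omega)
  refine ⟨movep q2 z y, y, hyx, sends_trans h1 (sends_trans h2 h3), ?_, ?_⟩
  · have hy : q2 y = p y := by
      simp [hq2, hq1, mover, hya, hyb, hyc, hyd, Ne.symm hya, Ne.symm hyb, Ne.symm hyc,
        Ne.symm hyd, hzy.ne, hzy.ne']
    simp [movep, hzy.ne, hzy.ne', hy]
  · intro v hv hvy
    simp only [mem_insert, mem_singleton, not_or] at hv
    by_cases hvz : v = z
    · subst hvz; simp [movep, hq2z]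
    · simp [movep, hq2, hq1, mover, hv.1, hv.2.1, hv.2.2.1, hv.2.2.2, hvy, hvz]

lemma del_five {G : SimpleGraph V} {x a b c d e z1 z2 y : V}
    (hab : a ≠ b) (hde : d ≠ e)
    (hda : d ≠ a) (hdb : d ≠ b) (hea : e ≠ a) (heb : e ≠ b)
    (hca : c ≠ a) (hcb : c ≠ b) (hcd : c ≠ d) (hce : c ≠ e)
    (hz1a : z1 ≠ a) (hz1b : z1 ≠ b) (hz1c : z1 ≠ c) (hz1d : z1 ≠ d) (hz1e : z1 ≠ e)
    (hz2a : z2 ≠ a) (hz2b : z2 ≠ b) (hz2c : z2 ≠ c) (hz2d : z2 ≠ d) (hz2e : z2 ≠ e)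
    (hz12 : z1 ≠ z2)
    (haz1 : G.Adj a z1) (hbz1 : G.Adj b z1) (hcz1 : G.Adj c z1)
    (hcz2 : G.Adj c z2) (hdz2 : G.Adj d z2) (hez2 : G.Adj e z2)
    (hcy : G.Adj c y) (hyx : G.Adj y x)
    (hya : y ≠ a) (hyb : y ≠ b) (hyd : y ≠ d) (hye : y ≠ e) :
    Del G x {a, b, c, d, e} := by
  intro p hp
  set q1 := mover p a b z1 with hq1
  have h1 : Sends G p q1 := sends_mover hab haz1 hbz1 (hp a (by simp)) (hp b (by simp))
  have hq1d : q1 d = p d := by simp [hq1, mover, hda, hdb, Ne.symm hz1d]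
  have hq1e : q1 e = p e := by simp [hq1, mover, hea, heb, Ne.symm hz1e]
  set q2 := mover q1 d e z2 with hq2
  have h2 : Sends G q1 q2 := sends_mover hde hdz2 hez2 (by rw [hq1d]; exact hp d (by simp))
    (by rw [hq1e]; exact hp e (by simp))
  have hq2z1 : q2 z1 = p z1 + 1 := by
    simp [hq2, hq1, mover, hz1a, hz1b, hz1d, hz1e, hz12, Ne.symm hz1d, Ne.symm hz1e,
      haz1.ne, haz1.ne', hbz1.ne, hbz1.ne']
  have hq2z2 : q2 z2 = p z2 + 1 := by
    have h' : q1 z2 = p z2 := by simp [hq1, mover, hz2a, hz2b, Ne.symm hz12]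
    simp [hq2, mover, hdz2.ne, hdz2.ne', hez2.ne, hez2.ne', h']
  set q3 := mover q2 z1 z2 c with hq3
  have h3 : Sends G q2 q3 := sends_mover hz12 hcz1.symm hcz2.symm (by omega) (by omega)
  have hq2c : q2 c = p c := by
    simp [hq2, hq1, mover, hca, hcb, hcd, hce, Ne.symm hz1c, Ne.symm hz2c]
  have hq3c : q3 c = p c + 1 := by
    simp [hq3, mover, Ne.symm hz1c, Ne.symm hz2c, hz1c, hz2c, hq2c]
  have h4 : Sends G q3 (movep q3 c y) :=
    sends_movep hcy (by rw [hq3c]; have := hp c (by simp); omega)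
  have key : ∀ v, v ≠ a → v ≠ b → v ≠ c → v ≠ d → v ≠ e → q3 v = p v := by
    intro v h1' h2' h3' h4' h5'
    by_cases hvz1 : v = z1
    · have hstep : q3 z1 = q2 z1 - 1 := by simp [hq3, mover]
      rw [hvz1, hstep, hq2z1]; omega
    · by_cases hvz2 : v = z2
      · have hstep : q3 z2 = q2 z2 - 1 := by simp [hq3, mover, Ne.symm hz12]
        rw [hvz2, hstep, hq2z2]; omega
      · simp [hq3, hq2, hq1, mover, h1', h2', h3', h4', h5', hvz1, hvz2]
  refine ⟨movep q3 c y, y, hyx, sends_trans h1 (sends_trans h2 (sends_trans h3 h4)), ?_, ?_⟩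
  · have hy : q3 y = p y := key y hya hyb hcy.ne' hyd hye
    simp [movep, hcy.ne, hcy.ne', hy]
  · intro v hv hvy
    simp only [mem_insert, mem_singleton, not_or] at hv
    obtain ⟨hva, hvb, hvc, hvd, hve⟩ := hv
    rw [show movep q3 c y v = q3 v by simp [movep, hvc, hvy], key v hva hvb hvc hvd hve]

lemma reach_big_del {G : SimpleGraph V} {x u y : V} {S : Finset V} {p : V → ℕ}
    (hu2 : 2 ≤ p u) (huy : G.Adj u y) (hyx : G.Adj y x)
    (hS : Del G x S) (hSN : ∀ s ∈ S, ¬ G.Adj s x) (hus : u ∉ S)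
    (hpS : ∀ s ∈ S, 1 ≤ p s) : RubblingReachable G p x := by
  refine reach_of_sends (sends_movep huy hu2) (reach_of_pebbleN_del hyx ?_ hS hSN ?_)
  · simp [movep, huy.ne, huy.ne']
  · intro s hs
    have hsy : s ≠ y := fun h => hSN s hs (h ▸ hyx)
    have hsu : s ≠ u := fun h => hus (h ▸ hs)
    have : movep p u y s = p s := by simp [movep, hsu, hsy]
    rw [this]; exact hpS s hs

lemma reach_big4 {G : SimpleGraph V} {x u y : V} {p : V → ℕ}
    (hu4 : 4 ≤ p u) (huy : G.Adj u y) (hyx : G.Adj y x) :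
    RubblingReachable G p x := by
  set q1 := movep p u y with hq1
  have h1 : Sends G p q1 := sends_movep huy (by omega)
  have hq1u : q1 u = p u - 2 := by simp [hq1, movep]
  have h2 : Sends G q1 (movep q1 u y) := sends_movep huy (by omega)
  refine reach_of_sends h1 (reach_of_sends h2 (reach_two hyx ?_))
  have hy1 : q1 y = p y + 1 := by simp [hq1, movep, huy.ne, huy.ne']
  simp [movep, huy.ne, huy.ne', hy1]

lemma reach_two_bigs {G : SimpleGraph V} {x u u' y y' : V} {p : V → ℕ}
    (huu' : u ≠ u') (hu : 2 ≤ p u) (hu' : 2 ≤ p u')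
    (huy : G.Adj u y) (hyx : G.Adj y x) (hu'y' : G.Adj u' y') (hy'x : G.Adj y' x)
    (hu'x : ¬ G.Adj u' x) : RubblingReachable G p x := by
  have hu'y : u' ≠ y := fun h => hu'x (h ▸ hyx)
  set q1 := movep p u y with hq1
  have h1 : Sends G p q1 := sends_movep huy hu
  have hq1u' : q1 u' = p u' := by simp [hq1, movep, Ne.symm huu', hu'y]
  have hq1y : q1 y = p y + 1 := by simp [hq1, movep, huy.ne, huy.ne']
  have h2 : Sends G q1 (movep q1 u' y') := sends_movep hu'y' (by omega)
  refine reach_of_sends h1 (reach_of_sends h2 ?_)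
  by_cases hyy : y = y'
  · refine reach_two hy'x ?_
    have : movep q1 u' y' y' = q1 y' + 1 := by simp [movep, hu'y'.ne, hu'y'.ne']
    rw [this, ← hyy, hq1y]; omega
  · refine reach_one_one hyy hyx hy'x ?_ ?_
    · have : movep q1 u' y' y = q1 y := by simp [movep, Ne.symm hu'y, hyy]
      rw [this, hq1y]; omega
    · have : movep q1 u' y' y' = q1 y' + 1 := by simp [movep, hu'y'.ne, hu'y'.ne']
      rw [this]; omega

lemma common_nbr {G : SimpleGraph V} (hconn : G.Connected) (hdiam : G.diam = 2)
    {u v : V} (huv : u ≠ v) (hadj : ¬ G.Adj u v) : ∃ w, G.Adj u w ∧ G.Adj w v := by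
  have hne : G.ediam ≠ ⊤ := SimpleGraph.ediam_ne_top_of_diam_ne_zero (by omega)
  have hd : G.dist u v ≤ 2 := hdiam ▸ SimpleGraph.dist_le_diam hne
  have hr : G.Reachable u v := hconn u v
  have h0 : G.dist u v ≠ 0 := Nat.pos_iff_ne_zero.mp (hr.pos_dist_of_ne huv)
  have h1 : G.dist u v ≠ 1 := fun h => hadj (SimpleGraph.dist_eq_one_iff_adj.mp h)
  have h2 : G.dist u v = 2 := by omega
  obtain ⟨w, hw⟩ := hr.exists_walk_length_eq_dist
  rw [h2] at hw
  cases w with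
  | nil => simp at hw
  | cons h w' => cases w' with
    | nil => simp at hw
    | cons h' w'' => cases w'' with
      | nil => exact ⟨_, h, h'⟩
      | cons h'' w''' => simp [SimpleGraph.Walk.length_cons] at hw

/-- Key covering lemma: if a family of 3-element sets has no two members meeting in
exactly one point, then the number of 2-subsets covered is at most the number of
sets plus the size of the support. -/
lemma triple_cover (𝒯 : Finset (Finset V)) (h3 : ∀ T ∈ 𝒯, T.card = 3)
    (hcl : ∀ T ∈ 𝒯, ∀ T' ∈ 𝒯, (T ∩ T').card ≠ 1) :
    (𝒯.biUnion fun T => T.powersetCard 2).card ≤ 𝒯.card + (𝒯.biUnion id).card := by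
  induction 𝒯 using Finset.induction_on with
  | empty => simp
  | @insert T 𝒮 hT IH =>
    have h3' : ∀ T' ∈ 𝒮, T'.card = 3 := fun T' h => h3 T' (mem_insert_of_mem h)
    have hcl' : ∀ T1 ∈ 𝒮, ∀ T2 ∈ 𝒮, (T1 ∩ T2).card ≠ 1 :=
      fun T1 h1 T2 h2 => hcl T1 (mem_insert_of_mem h1) T2 (mem_insert_of_mem h2)
    have IH' := IH h3' hcl'
    set cov := 𝒮.biUnion (fun T => T.powersetCard 2) with hcov
    set supp := 𝒮.biUnion id with hsupp
    have hTcard : T.card = 3 := h3 T (mem_insert_self _ _)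
    have hprT : (T.powersetCard 2).card = 3 := by
      rw [Finset.card_powersetCard, hTcard]; rfl
    have key : ∀ v ∈ T ∩ supp, ∃ P, P ∈ T.powersetCard 2 ∩ cov ∧ v ∈ P := by
      intro v hv
      rw [mem_inter] at hv
      obtain ⟨hvT, hvs⟩ := hv
      rw [hsupp, mem_biUnion] at hvs
      obtain ⟨T₁, hT₁, hvT₁⟩ := hvs
      simp only [id_eq] at hvT₁
      have hint : 2 ≤ (T ∩ T₁).card := by
        have h1 : (T ∩ T₁).card ≠ 1 := hcl T (mem_insert_self _ _) T₁ (mem_insert_of_mem hT₁)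
        have h0 : 0 < (T ∩ T₁).card := card_pos.mpr ⟨v, mem_inter.mpr ⟨hvT, hvT₁⟩⟩
        omega
      obtain ⟨w, hw, hwv⟩ := Finset.exists_mem_ne hint v
      have hwT := mem_inter.mp hw
      have hvw2 : ({v, w} : Finset V).card = 2 := by
        rw [card_insert_of_notMem (by simp [Ne.symm hwv]), card_singleton]
      have hsubT : ({v, w} : Finset V) ⊆ T := by
        intro z hz
        rcases mem_insert.mp hz with h | h
        · exact h ▸ hvT
        · exact (mem_singleton.mp h) ▸ hwT.1
      have hsubT₁ : ({v, w} : Finset V) ⊆ T₁ := by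
        intro z hz
        rcases mem_insert.mp hz with h | h
        · exact h ▸ hvT₁
        · exact (mem_singleton.mp h) ▸ hwT.2
      refine ⟨{v, w}, mem_inter.mpr ⟨?_, ?_⟩, by simp⟩
      · exact Finset.mem_powersetCard.mpr ⟨hsubT, hvw2⟩
      · rw [hcov, mem_biUnion]
        exact ⟨T₁, hT₁, Finset.mem_powersetCard.mpr ⟨hsubT₁, hvw2⟩⟩
    have main : (T.powersetCard 2 \ cov).card ≤ 1 + (T \ supp).card := by
      have hsplitT : (T ∩ supp).card + (T \ supp).card = 3 := by
        rw [Finset.card_inter_add_card_sdiff, hTcard]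
      have hsplitP : (T.powersetCard 2 ∩ cov).card + (T.powersetCard 2 \ cov).card = 3 := by
        rw [Finset.card_inter_add_card_sdiff, hprT]
      by_cases hj : 2 ≤ (T \ supp).card
      · omega
      · by_cases hj1 : (T \ supp).card = 1
        · have h2 : 0 < (T ∩ supp).card := by omega
          obtain ⟨v, hv⟩ := card_pos.mp h2
          obtain ⟨P, hP, _⟩ := key v hv
          have : 0 < (T.powersetCard 2 ∩ cov).card := card_pos.mpr ⟨P, hP⟩
          omega
        · have hj0 : (T \ supp).card = 0 := by omega
          have hTsub : T ⊆ supp := by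
            intro z hz
            by_contra hzs
            have hmem : z ∈ T \ supp := mem_sdiff.mpr ⟨hz, hzs⟩
            rw [card_eq_zero.mp hj0] at hmem
            exact absurd hmem (notMem_empty z)
          obtain ⟨a, b, c, hab, hac, hbc, hTeq⟩ := Finset.card_eq_three.mp hTcard
          have ha : a ∈ T ∩ supp := mem_inter.mpr ⟨by rw [hTeq]; simp,
            hTsub (by rw [hTeq]; simp)⟩
          have hb : b ∈ T ∩ supp := mem_inter.mpr ⟨by rw [hTeq]; simp,
            hTsub (by rw [hTeq]; simp)⟩
          have hc : c ∈ T ∩ supp := mem_inter.mpr ⟨by rw [hTeq]; simp,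
            hTsub (by rw [hTeq]; simp)⟩
          obtain ⟨Pa, hPa, haP⟩ := key a ha
          obtain ⟨Pb, hPb, hbP⟩ := key b hb
          obtain ⟨Pc, hPc, hcP⟩ := key c hc
          have hne : Pa ≠ Pb ∨ Pa ≠ Pc := by
            by_contra hcon
            push_neg at hcon
            obtain ⟨h1, h2⟩ := hcon
            have hsub : ({a, b, c} : Finset V) ⊆ Pa := by
              intro z hz
              rcases mem_insert.mp hz with h | h
              · exact h ▸ haP
              · rcases mem_insert.mp h with h' | h'
                · exact h' ▸ (h1 ▸ hbP)
                · exact (mem_singleton.mp h') ▸ (h2 ▸ hcP)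
            have hPa2 : Pa.card = 2 :=
              (Finset.mem_powersetCard.mp (mem_inter.mp hPa).1).2
            have h3le : 3 ≤ Pa.card := by
              calc 3 = ({a, b, c} : Finset V).card := (hTeq ▸ hTcard).symm
              _ ≤ Pa.card := card_le_card hsub
            omega
          have h2 : 2 ≤ (T.powersetCard 2 ∩ cov).card := by
            rcases hne with h | h
            · exact Finset.one_lt_card.mpr ⟨Pa, hPa, Pb, hPb, h⟩
            · exact Finset.one_lt_card.mpr ⟨Pa, hPa, Pc, hPc, h⟩
          omega
    rw [Finset.biUnion_insert, Finset.biUnion_insert, card_insert_of_notMem hT]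
    simp only [id_eq]
    have e1 : (T.powersetCard 2 ∪ cov).card = (T.powersetCard 2 \ cov).card + cov.card := by
      rw [← Finset.card_union_of_disjoint sdiff_disjoint, Finset.sdiff_union_self_eq_union]
    have e2 : (T ∪ supp).card = (T \ supp).card + supp.card := by
      rw [← Finset.card_union_of_disjoint sdiff_disjoint, Finset.sdiff_union_self_eq_union]
    rw [e1, e2]
    omega

lemma N_large {G : SimpleGraph V} [Fintype V] [DecidableRel G.Adj]
    (hconn : G.Connected) (hdiam : G.diam = 2) (x : V) (A'' : Finset V)
    (hA : ∀ a ∈ A'', ¬ G.Adj a x ∧ a ≠ x)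
    (hN2 : ∀ y, G.Adj y x → ∀ a ∈ A'', ∀ b ∈ A'', G.Adj a y → G.Adj b y → a = b) :
    A''.card ≤ (G.neighborFinset x).card := by
  have hex : ∀ a ∈ A'', ∃ y, G.Adj a y ∧ G.Adj y x := by
    intro a ha
    exact common_nbr hconn hdiam (hA a ha).2 (hA a ha).1
  set ya : V → V := fun a =>
    if h : ∃ y, G.Adj a y ∧ G.Adj y x then Classical.choose h else x with hya
  have hspec : ∀ a ∈ A'', G.Adj a (ya a) ∧ G.Adj (ya a) x := by
    intro a ha
    have h := hex a ha
    simp only [hya, dif_pos h]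
    exact Classical.choose_spec h
  apply Finset.card_le_card_of_injOn ya
  · intro a ha
    rw [Finset.mem_coe, SimpleGraph.mem_neighborFinset]
    exact ((hspec a ha).2).symm
  · intro a ha b hb hab
    exact hN2 (ya a) (hspec a ha).2 a ha b hb (hspec a ha).1 (hab ▸ (hspec b hb).1)

lemma master_count {G : SimpleGraph V} [Fintype V] [DecidableRel G.Adj]
    (hconn : G.Connected) (hdiam : G.diam = 2) (x : V) (A' W : Finset V)
    (hA'R : ∀ a ∈ A', ¬ G.Adj a x ∧ a ≠ x)
    (hN2 : ∀ y, G.Adj y x → ∀ a ∈ A', ∀ b ∈ A', G.Adj a y → G.Adj b y → a = b)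
    (hdeg : ∀ s ∈ A', ∀ a ∈ A', ∀ b ∈ A', G.Adj a s → G.Adj b s → a = b)
    (h4 : ∀ z, z ∉ A' → z ≠ x → ¬ G.Adj z x →
      (A'.filter (fun a => G.Adj z a)).card ≤ 3)
    (h6 : ∀ z1 z2, z1 ∉ A' → z1 ≠ x → ¬ G.Adj z1 x → z2 ∉ A' → z2 ≠ x → ¬ G.Adj z2 x →
      z1 ≠ z2 → (A'.filter (fun a => G.Adj z1 a)).card = 3 →
      (A'.filter (fun a => G.Adj z2 a)).card = 3 →
      ((A'.filter (fun a => G.Adj z1 a)) ∩ (A'.filter (fun a => G.Adj z2 a))).card ≠ 1) :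
    ∃ Z : Finset V, (∀ z ∈ Z, z ∉ A' ∧ z ∉ W ∧ z ≠ x ∧ ¬ G.Adj z x) ∧
      A'.card.choose 2 ≤ A'.card / 2 + 3 * W.card + Z.card + A'.card := by
  classical
  set P := A'.powersetCard 2 with hP
  have hPcard : P.card = A'.card.choose 2 := Finset.card_powersetCard 2 A'
  have hPmem : ∀ e ∈ P, e ⊆ A' ∧ e.card = 2 := by
    intro e he; exact Finset.mem_powersetCard.mp he
  set Padj := P.filter (fun e => ∃ a ∈ e, ∃ b ∈ e, G.Adj a b) with hPadj
  set Pnon := P \ Padj with hPnon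
  -- adjacent pairs form a matching
  have hPadjcard : 2 * Padj.card ≤ A'.card := by
    have hadj_pair : ∀ e ∈ Padj, ∀ v ∈ e, ∃ w ∈ e, w ≠ v ∧ G.Adj v w := by
      intro e he v hv
      have h := Finset.mem_filter.mp he
      obtain ⟨a, ha, b, hb, hadj⟩ := h.2
      obtain ⟨hsub, hc⟩ := hPmem e h.1
      obtain ⟨u1, u2, hu12, rfl⟩ := Finset.card_eq_two.mp hc
      have hadj12 : G.Adj u1 u2 := by
        rcases mem_insert.mp ha with h1 | h1
        · rcases mem_insert.mp hb with h2 | h2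
          · rw [h1, h2] at hadj; exact absurd hadj (SimpleGraph.irrefl G)
          · rw [h1, mem_singleton.mp h2] at hadj; exact hadj
        · rcases mem_insert.mp hb with h2 | h2
          · rw [mem_singleton.mp h1, h2] at hadj; exact hadj.symm
          · rw [mem_singleton.mp h1, mem_singleton.mp h2] at hadj
            exact absurd hadj (SimpleGraph.irrefl G)
      rcases mem_insert.mp hv with h1 | h1
      · exact ⟨u2, by simp, by rw [h1]; exact Ne.symm hu12, by rw [h1]; exact hadj12⟩
      · have h1' : v = u2 := mem_singleton.mp h1
        exact ⟨u1, by simp, by rw [h1']; exact hu12, by rw [h1']; exact hadj12.symm⟩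
    have pairEq : ∀ (e : Finset V), e.card = 2 → ∀ v ∈ e, ∀ w ∈ e, w ≠ v → e = {v, w} := by
      intro e hc v hv w hw hwv
      have hvw : ({v, w} : Finset V).card = 2 := by
        rw [card_insert_of_notMem (by simp [Ne.symm hwv]), card_singleton]
      exact (Finset.eq_of_subset_of_card_le
        (Finset.insert_subset hv (Finset.singleton_subset_iff.mpr hw))
        (le_of_eq (by rw [hvw, hc]))).symm
    have hdisj : ∀ e₁ ∈ Padj, ∀ e₂ ∈ Padj, e₁ ≠ e₂ → Disjoint e₁ e₂ := by
      intro e₁ he₁ e₂ he₂ hne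
      rw [Finset.disjoint_left]
      intro v hv1 hv2
      obtain ⟨w₁, hw₁e, hw₁v, hw1adj⟩ := hadj_pair e₁ he₁ v hv1
      obtain ⟨w₂, hw₂e, hw₂v, hw2adj⟩ := hadj_pair e₂ he₂ v hv2
      obtain ⟨hsub₁, hc₁⟩ := hPmem e₁ (Finset.mem_filter.mp he₁).1
      obtain ⟨hsub₂, hc₂⟩ := hPmem e₂ (Finset.mem_filter.mp he₂).1
      have hvA : v ∈ A' := hsub₁ hv1
      have hww : w₁ = w₂ :=
        hdeg v hvA w₁ (hsub₁ hw₁e) w₂ (hsub₂ hw₂e) hw1adj.symm hw2adj.symm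
      apply hne
      rw [pairEq e₁ hc₁ v hv1 w₁ hw₁e hw₁v, pairEq e₂ hc₂ v hv2 w₂ hw₂e hw₂v, hww]
    have hbu : (Padj.biUnion id).card = ∑ e ∈ Padj, e.card :=
      Finset.card_biUnion hdisj
    have hsum : ∑ e ∈ Padj, e.card = 2 * Padj.card := by
      rw [Finset.sum_congr rfl (fun e he => (hPmem e (Finset.mem_filter.mp he).1).2)]
      simp [mul_comm]
      rfl
    have hsub : Padj.biUnion id ⊆ A' := by
      intro v hv
      rw [mem_biUnion] at hv
      obtain ⟨e, he, hve⟩ := hv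
      exact (hPmem e (Finset.mem_filter.mp he).1).1 hve
    calc 2 * Padj.card = ∑ e ∈ Padj, e.card := hsum.symm
    _ = (Padj.biUnion id).card := hbu.symm
    _ ≤ A'.card := card_le_card hsub
  -- choice of common neighbours for non-adjacent pairs
  set F : Finset V → V := fun e =>
    if h : ∃ w, ∀ a ∈ e, G.Adj a w then Classical.choose h else x with hF
  have hFspec : ∀ e ∈ Pnon, (∀ a ∈ e, G.Adj a (F e)) := by
    intro e he
    rw [hPnon, mem_sdiff] at he
    obtain ⟨heP, henadj⟩ := he
    obtain ⟨hsub, hc⟩ := hPmem e heP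
    obtain ⟨a, b, hab, heq⟩ := Finset.card_eq_two.mp hc
    have hnadj : ¬ G.Adj a b := by
      intro h
      exact henadj (Finset.mem_filter.mpr ⟨heP, ⟨a, by simp [heq], b, by simp [heq], h⟩⟩)
    obtain ⟨w, hw1, hw2⟩ := common_nbr hconn hdiam hab hnadj
    have hex : ∃ w, ∀ a ∈ e, G.Adj a w := by
      refine ⟨w, ?_⟩
      intro z hz
      rw [heq] at hz
      rcases mem_insert.mp hz with h | h
      · exact h ▸ hw1
      · exact (mem_singleton.mp h) ▸ hw2.symm
    simp only [hF, dif_pos hex]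
    exact Classical.choose_spec hex
  -- properties of the chosen neighbour
  have hFprop : ∀ e ∈ Pnon, F e ∉ A' ∧ F e ≠ x ∧ ¬ G.Adj (F e) x := by
    intro e he
    have hspec := hFspec e he
    rw [hPnon, mem_sdiff] at he
    obtain ⟨heP, _⟩ := he
    obtain ⟨hsub, hc⟩ := hPmem e heP
    obtain ⟨a, b, hab, heq⟩ := Finset.card_eq_two.mp hc
    have haA : a ∈ A' := hsub (by rw [heq]; simp)
    have hbA : b ∈ A' := hsub (by rw [heq]; simp)
    have hadja : G.Adj a (F e) := hspec a (by rw [heq]; simp)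
    have hadjb : G.Adj b (F e) := hspec b (by rw [heq]; simp)
    refine ⟨?_, ?_, ?_⟩
    · intro hFA
      exact hab (hdeg (F e) hFA a haA b hbA hadja hadjb)
    · intro hFx
      exact (hA'R a haA).1 (hFx ▸ hadja)
    · intro hFN
      exact hab (hN2 (F e) hFN a haA b hbA hadja hadjb)
  -- fibers
  have hfiber : ∀ z, (Pnon.filter (fun e => F e = z)) ⊆
      (A'.filter (fun a => G.Adj z a)).powersetCard 2 := by
    intro z e he
    rw [Finset.mem_filter] at he
    obtain ⟨hePn, heFz⟩ := he
    have hspec := hFspec e hePn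
    rw [hPnon, mem_sdiff] at hePn
    obtain ⟨heP, _⟩ := hePn
    obtain ⟨hsub, hc⟩ := hPmem e heP
    rw [Finset.mem_powersetCard]
    constructor
    · intro a hae
      rw [Finset.mem_filter]
      exact ⟨hsub hae, heFz ▸ (hspec a hae).symm⟩
    · exact hc
  -- image and fiber counting
  set img := Pnon.image F with himg
  have himgprop : ∀ z ∈ img, z ∉ A' ∧ z ≠ x ∧ ¬ G.Adj z x := by
    intro z hz
    rw [himg, Finset.mem_image] at hz
    obtain ⟨e, he, rfl⟩ := hz
    exact hFprop e he
  have hcount : Pnon.card = ∑ z ∈ img, (Pnon.filter (fun e => F e = z)).card :=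
    Finset.card_eq_sum_card_fiberwise (fun e he => Finset.mem_image_of_mem F he)
  set Z := img \ W with hZdef
  have hZprop : ∀ z ∈ Z, z ∉ A' ∧ z ∉ W ∧ z ≠ x ∧ ¬ G.Adj z x := by
    intro z hz
    rw [hZdef, mem_sdiff] at hz
    obtain ⟨h1, h2⟩ := hz
    obtain ⟨ha, hb, hc⟩ := himgprop z h1
    exact ⟨ha, h2, hb, hc⟩
  -- fiber size bounds
  have hfibcard : ∀ z ∈ img, (Pnon.filter (fun e => F e = z)).card ≤
      ((A'.filter (fun a => G.Adj z a)).card).choose 2 := by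
    intro z _
    calc (Pnon.filter (fun e => F e = z)).card
        ≤ ((A'.filter (fun a => G.Adj z a)).powersetCard 2).card :=
          card_le_card (hfiber z)
    _ = ((A'.filter (fun a => G.Adj z a)).card).choose 2 :=
          Finset.card_powersetCard 2 _
  have hfib3 : ∀ z ∈ img, (Pnon.filter (fun e => F e = z)).card ≤ 3 := by
    intro z hz
    obtain ⟨h1, h2, h3⟩ := himgprop z hz
    have := h4 z h1 h2 h3
    calc (Pnon.filter (fun e => F e = z)).card
        ≤ ((A'.filter (fun a => G.Adj z a)).card).choose 2 := hfibcard z hz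
    _ ≤ Nat.choose 3 2 := Nat.choose_le_choose 2 this
    _ = 3 := rfl
  -- split the sum over the image
  have hsplit : ∑ z ∈ img, (Pnon.filter (fun e => F e = z)).card =
      ∑ z ∈ img ∩ W, (Pnon.filter (fun e => F e = z)).card +
      ∑ z ∈ Z, (Pnon.filter (fun e => F e = z)).card := by
    have hdisjIW : Disjoint (img ∩ W) Z := by
      rw [hZdef]
      exact Finset.disjoint_right.mpr
        (fun z hz hzc => (mem_sdiff.mp hz).2 (mem_inter.mp hzc).2)
    have hun : img ∩ W ∪ Z = img := by
      ext z
      simp only [mem_union, mem_inter, hZdef, mem_sdiff]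
      tauto
    calc ∑ z ∈ img, (Pnon.filter (fun e => F e = z)).card
        = ∑ z ∈ img ∩ W ∪ Z, (Pnon.filter (fun e => F e = z)).card := by rw [hun]
    _ = _ := Finset.sum_union hdisjIW
  have hWsum : ∑ z ∈ img ∩ W, (Pnon.filter (fun e => F e = z)).card ≤ 3 * W.card := by
    calc ∑ z ∈ img ∩ W, (Pnon.filter (fun e => F e = z)).card
        ≤ ∑ _z ∈ img ∩ W, 3 :=
          Finset.sum_le_sum (fun z hz => hfib3 z (mem_inter.mp hz).1)
    _ = 3 * (img ∩ W).card := by rw [Finset.sum_const, smul_eq_mul, mul_comm]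
    _ ≤ 3 * W.card := by
          have : (img ∩ W).card ≤ W.card := card_le_card (inter_subset_right)
          omega
  -- split Z by fiber degree
  set Z₂ := Z.filter (fun z => (A'.filter (fun a => G.Adj z a)).card ≤ 2) with hZ₂
  set Z₃ := Z.filter (fun z => ¬ (A'.filter (fun a => G.Adj z a)).card ≤ 2) with hZ₃
  have hZsum : ∑ z ∈ Z, (Pnon.filter (fun e => F e = z)).card =
      ∑ z ∈ Z₂, (Pnon.filter (fun e => F e = z)).card +
      ∑ z ∈ Z₃, (Pnon.filter (fun e => F e = z)).card :=
    (Finset.sum_filter_add_sum_filter_not Z _ _).symm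
  have hZ₂sum : ∑ z ∈ Z₂, (Pnon.filter (fun e => F e = z)).card ≤ Z₂.card := by
    calc ∑ z ∈ Z₂, (Pnon.filter (fun e => F e = z)).card ≤ ∑ _z ∈ Z₂, 1 := by
          apply Finset.sum_le_sum
          intro z hz
          rw [hZ₂, Finset.mem_filter] at hz
          calc (Pnon.filter (fun e => F e = z)).card
              ≤ ((A'.filter (fun a => G.Adj z a)).card).choose 2 :=
                hfibcard z (mem_sdiff.mp hz.1).1
          _ ≤ Nat.choose 2 2 := Nat.choose_le_choose 2 hz.2
          _ = 1 := rfl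
    _ = Z₂.card := by rw [Finset.sum_const, smul_eq_mul, mul_one]
  -- the triple family
  have hZ₃deg : ∀ z ∈ Z₃, (A'.filter (fun a => G.Adj z a)).card = 3 := by
    intro z hz
    rw [hZ₃, Finset.mem_filter] at hz
    have h1 := hz.2
    obtain ⟨ha, _, hb, hc⟩ := hZprop z hz.1
    have := h4 z ha hb hc
    omega
  set 𝒯 := Z₃.image (fun z => A'.filter (fun a => G.Adj z a)) with h𝒯
  have h𝒯3 : ∀ T ∈ 𝒯, T.card = 3 := by
    intro T hT
    rw [h𝒯, Finset.mem_image] at hT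
    obtain ⟨z, hz, rfl⟩ := hT
    exact hZ₃deg z hz
  have h𝒯cl : ∀ T ∈ 𝒯, ∀ T' ∈ 𝒯, (T ∩ T').card ≠ 1 := by
    intro T hT T' hT'
    rw [h𝒯, Finset.mem_image] at hT hT'
    obtain ⟨z1, hz1, rfl⟩ := hT
    obtain ⟨z2, hz2, rfl⟩ := hT'
    by_cases hzz : z1 = z2
    · subst hzz
      rw [Finset.inter_self]
      rw [hZ₃deg z1 hz1]
      omega
    · obtain ⟨ha1, _, hb1, hc1⟩ := hZprop z1 (Finset.mem_filter.mp hz1).1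
      obtain ⟨ha2, _, hb2, hc2⟩ := hZprop z2 (Finset.mem_filter.mp hz2).1
      exact h6 z1 z2 ha1 hb1 hc1 ha2 hb2 hc2 hzz (hZ₃deg z1 hz1) (hZ₃deg z2 hz2)
  have hZ₃sum : ∑ z ∈ Z₃, (Pnon.filter (fun e => F e = z)).card ≤ Z₃.card + A'.card := by
    have hdisjfib : ∀ z1 ∈ Z₃, ∀ z2 ∈ Z₃, z1 ≠ z2 →
        Disjoint (Pnon.filter (fun e => F e = z1)) (Pnon.filter (fun e => F e = z2)) := by
      intro z1 _ z2 _ hne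
      rw [Finset.disjoint_left]
      intro e h1 h2
      rw [Finset.mem_filter] at h1 h2
      exact hne (h1.2 ▸ h2.2)
    have hbu : (Z₃.biUnion (fun z => Pnon.filter (fun e => F e = z))).card =
        ∑ z ∈ Z₃, (Pnon.filter (fun e => F e = z)).card :=
      Finset.card_biUnion hdisjfib
    have hsub : Z₃.biUnion (fun z => Pnon.filter (fun e => F e = z)) ⊆
        𝒯.biUnion (fun T => T.powersetCard 2) := by
      intro e he
      rw [mem_biUnion] at he ⊢
      obtain ⟨z, hz, hez⟩ := he
      exact ⟨A'.filter (fun a => G.Adj z a), by rw [h𝒯]; exact Finset.mem_image_of_mem _ hz,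
        hfiber z hez⟩
    have hsupp : (𝒯.biUnion id).card ≤ A'.card := by
      apply card_le_card
      intro v hv
      rw [mem_biUnion] at hv
      obtain ⟨T, hT, hvT⟩ := hv
      rw [h𝒯, Finset.mem_image] at hT
      obtain ⟨z, _, rfl⟩ := hT
      exact Finset.mem_of_mem_filter v hvT
    calc ∑ z ∈ Z₃, (Pnon.filter (fun e => F e = z)).card
        = (Z₃.biUnion (fun z => Pnon.filter (fun e => F e = z))).card := hbu.symm
    _ ≤ (𝒯.biUnion (fun T => T.powersetCard 2)).card := card_le_card hsub
    _ ≤ 𝒯.card + (𝒯.biUnion id).card := triple_cover 𝒯 h𝒯3 h𝒯cl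
    _ ≤ Z₃.card + A'.card := by
          have := Finset.card_image_le (s := Z₃) (f := fun z => A'.filter (fun a => G.Adj z a))
          rw [← h𝒯] at this
          omega
  -- assemble
  refine ⟨Z, hZprop, ?_⟩
  have hPsplit : P.card = Padj.card + Pnon.card := by
    rw [hPnon]
    have hsub : Padj ⊆ P := Finset.filter_subset _ _
    rw [Finset.card_sdiff_of_subset hsub]
    have := card_le_card hsub
    omega
  have hZcard : Z.card = Z₂.card + Z₃.card := by
    rw [hZ₂, hZ₃]
    exact (Finset.card_filter_add_card_filter_not _).symm
  rw [← hPcard]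
  omega

lemma card_le_five (a b c d e : V) : ({a, b, c, d, e} : Finset V).card ≤ 5 := by
  have h1 := card_insert_le a ({b, c, d, e} : Finset V)
  have h2 := card_insert_le b ({c, d, e} : Finset V)
  have h3 := card_insert_le c ({d, e} : Finset V)
  have h4 := card_insert_le d ({e} : Finset V)
  have h5 : ({e} : Finset V).card = 1 := card_singleton e
  omega

lemma card_le_four (a b c d : V) : ({a, b, c, d} : Finset V).card ≤ 4 := by
  have h2 := card_insert_le a ({b, c, d} : Finset V)
  have h3 := card_insert_le b ({c, d} : Finset V)
  have h4 := card_insert_le c ({d} : Finset V)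
  have h5 : ({d} : Finset V).card = 1 := card_singleton d
  omega

lemma card_le_three (a b c : V) : ({a, b, c} : Finset V).card ≤ 3 := by
  have h3 := card_insert_le a ({b, c} : Finset V)
  have h4 := card_insert_le b ({c} : Finset V)
  have h5 : ({c} : Finset V).card = 1 := card_singleton c
  omega

lemma card_le_two' (a b : V) : ({a, b} : Finset V).card ≤ 2 := by
  have h4 := card_insert_le a ({b} : Finset V)
  have h5 : ({b} : Finset V).card = 1 := card_singleton b
  omega

lemma disch_N2 {G : SimpleGraph V} {x : V} {A' : Finset V}
    (hforbid : ∀ S : Finset V, S ⊆ A' → S.card ≤ 5 → Del G x S → False) :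
    ∀ y, G.Adj y x → ∀ a ∈ A', ∀ b ∈ A', G.Adj a y → G.Adj b y → a = b := by
  intro y hyx a ha b hb hay hby
  by_contra hab
  refine hforbid {a, b} ?_ (le_trans (card_le_two' a b) (by omega))
    (del_pair hab hay hby hyx)
  intro z hz
  rcases mem_insert.mp hz with rfl | hz
  · exact ha
  · exact (mem_singleton.mp hz) ▸ hb

lemma disch_deg {G : SimpleGraph V} (hconn : G.Connected) (hdiam : G.diam = 2)
    {x : V} {A' : Finset V}
    (hA'R : ∀ a ∈ A', ¬ G.Adj a x ∧ a ≠ x)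
    (hforbid : ∀ S : Finset V, S ⊆ A' → S.card ≤ 5 → Del G x S → False) :
    ∀ s ∈ A', ∀ a ∈ A', ∀ b ∈ A', G.Adj a s → G.Adj b s → a = b := by
  intro s hs a ha b hb has hbs
  by_contra hab
  obtain ⟨y, hsy, hyx⟩ := common_nbr hconn hdiam (hA'R s hs).2 (hA'R s hs).1
  have hya : y ≠ a := fun h => (hA'R a ha).1 (h ▸ hyx)
  have hyb : y ≠ b := fun h => (hA'R b hb).1 (h ▸ hyx)
  refine hforbid {a, b, s} ?_ (le_trans (card_le_three a b s) (by omega))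
    (del_cherry hab has hbs hsy hyx hya hyb)
  intro z hz
  rcases mem_insert.mp hz with rfl | hz
  · exact ha
  · rcases mem_insert.mp hz with rfl | hz
    · exact hb
    · exact (mem_singleton.mp hz) ▸ hs

lemma disch_4 {G : SimpleGraph V} [DecidableRel G.Adj] (hconn : G.Connected)
    (hdiam : G.diam = 2) {x : V} {A' : Finset V}
    (hA'R : ∀ a ∈ A', ¬ G.Adj a x ∧ a ≠ x)
    (hforbid : ∀ S : Finset V, S ⊆ A' → S.card ≤ 5 → Del G x S → False) :
    ∀ z, z ∉ A' → z ≠ x → ¬ G.Adj z x →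
      (A'.filter (fun a => G.Adj z a)).card ≤ 3 := by
  intro z hzA hzx hzadj
  by_contra hcard
  push_neg at hcard
  set Sz := A'.filter (fun a => G.Adj z a) with hSz
  obtain ⟨a, ha⟩ := Finset.card_pos.mp (show 0 < Sz.card by omega)
  obtain ⟨b, hb⟩ := Finset.card_pos.mp
    (show 0 < (Sz.erase a).card by rw [Finset.card_erase_of_mem ha]; omega)
  obtain ⟨c, hc⟩ := Finset.card_pos.mp
    (show 0 < ((Sz.erase a).erase b).card by
      rw [Finset.card_erase_of_mem hb, Finset.card_erase_of_mem ha]; omega)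
  obtain ⟨d, hd⟩ := Finset.card_pos.mp
    (show 0 < (((Sz.erase a).erase b).erase c).card by
      rw [Finset.card_erase_of_mem hc, Finset.card_erase_of_mem hb,
        Finset.card_erase_of_mem ha]; omega)
  have hbSz : b ∈ Sz := mem_of_mem_erase hb
  have hcSz : c ∈ Sz := mem_of_mem_erase (mem_of_mem_erase hc)
  have hdSz : d ∈ Sz := mem_of_mem_erase (mem_of_mem_erase (mem_of_mem_erase hd))
  have hba : b ≠ a := ne_of_mem_erase hb
  have hcb : c ≠ b := ne_of_mem_erase hc
  have hca : c ≠ a := ne_of_mem_erase (mem_of_mem_erase hc)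
  have hdc : d ≠ c := ne_of_mem_erase hd
  have hdb : d ≠ b := ne_of_mem_erase (mem_of_mem_erase hd)
  have hda : d ≠ a := ne_of_mem_erase (mem_of_mem_erase (mem_of_mem_erase hd))
  have hmem : ∀ v ∈ Sz, v ∈ A' ∧ G.Adj v z := by
    intro v hv
    rw [hSz, Finset.mem_filter] at hv
    exact ⟨hv.1, hv.2.symm⟩
  obtain ⟨y, hzy, hyx⟩ := common_nbr hconn hdiam hzx hzadj
  have hy : ∀ v ∈ Sz, y ≠ v := fun v hv h => (hA'R v (hmem v hv).1).1 (h ▸ hyx)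
  refine hforbid {a, b, c, d} ?_ (le_trans (card_le_four a b c d) (by omega))
    (del_four (Ne.symm hba) (Ne.symm hdc) hca hcb hda hdb
      (hmem a ha).2 (hmem b hbSz).2 (hmem c hcSz).2 (hmem d hdSz).2 hzy hyx
      (hy a ha) (hy b hbSz) (hy c hcSz) (hy d hdSz))
  intro v hv
  rcases mem_insert.mp hv with rfl | hv
  · exact (hmem v ha).1
  · rcases mem_insert.mp hv with rfl | hv
    · exact (hmem v hbSz).1
    · rcases mem_insert.mp hv with rfl | hv
      · exact (hmem v hcSz).1
      · exact ((mem_singleton.mp hv) ▸ (hmem d hdSz).1)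

lemma disch_6 {G : SimpleGraph V} [DecidableRel G.Adj] (hconn : G.Connected)
    (hdiam : G.diam = 2) {x : V} {A' : Finset V}
    (hA'R : ∀ a ∈ A', ¬ G.Adj a x ∧ a ≠ x)
    (hforbid : ∀ S : Finset V, S ⊆ A' → S.card ≤ 5 → Del G x S → False) :
    ∀ z1 z2, z1 ∉ A' → z1 ≠ x → ¬ G.Adj z1 x → z2 ∉ A' → z2 ≠ x → ¬ G.Adj z2 x →
      z1 ≠ z2 → (A'.filter (fun a => G.Adj z1 a)).card = 3 →
      (A'.filter (fun a => G.Adj z2 a)).card = 3 →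
      ((A'.filter (fun a => G.Adj z1 a)) ∩ (A'.filter (fun a => G.Adj z2 a))).card ≠ 1 := by
  intro z1 z2 hz1A hz1x hz1adj hz2A hz2x hz2adj hz12 hS1 hS2 h1
  set S1 := A'.filter (fun a => G.Adj z1 a) with hSz1
  set S2 := A'.filter (fun a => G.Adj z2 a) with hSz2
  obtain ⟨c, hc⟩ := Finset.card_eq_one.mp h1
  have hcmem : c ∈ S1 ∩ S2 := by rw [hc]; exact mem_singleton_self c
  have hcS1 : c ∈ S1 := (mem_inter.mp hcmem).1
  have hcS2 : c ∈ S2 := (mem_inter.mp hcmem).2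
  have e1 : (S1.erase c).card = 2 := by rw [Finset.card_erase_of_mem hcS1, hS1]
  have e2 : (S2.erase c).card = 2 := by rw [Finset.card_erase_of_mem hcS2, hS2]
  obtain ⟨a, b, hab, hE1⟩ := Finset.card_eq_two.mp e1
  obtain ⟨d, e, hde, hE2⟩ := Finset.card_eq_two.mp e2
  have haE : a ∈ S1.erase c := by rw [hE1]; simp
  have hbE : b ∈ S1.erase c := by rw [hE1]; simp
  have hdE : d ∈ S2.erase c := by rw [hE2]; simp
  have heE : e ∈ S2.erase c := by rw [hE2]; simp
  have haS1 : a ∈ S1 := mem_of_mem_erase haE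
  have hbS1 : b ∈ S1 := mem_of_mem_erase hbE
  have hdS2 : d ∈ S2 := mem_of_mem_erase hdE
  have heS2 : e ∈ S2 := mem_of_mem_erase heE
  have hac : a ≠ c := ne_of_mem_erase haE
  have hbc : b ≠ c := ne_of_mem_erase hbE
  have hdc : d ≠ c := ne_of_mem_erase hdE
  have hec : e ≠ c := ne_of_mem_erase heE
  have hnotS2 : ∀ v, v ∈ S1 → v ≠ c → v ∉ S2 := by
    intro v hv hvc hv2
    have : v ∈ S1 ∩ S2 := mem_inter.mpr ⟨hv, hv2⟩
    rw [hc] at this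
    exact hvc (mem_singleton.mp this)
  have hnotS1 : ∀ v, v ∈ S2 → v ≠ c → v ∉ S1 := by
    intro v hv hvc hv1
    have : v ∈ S1 ∩ S2 := mem_inter.mpr ⟨hv1, hv⟩
    rw [hc] at this
    exact hvc (mem_singleton.mp this)
  have hda : d ≠ a := fun h => (hnotS2 a haS1 hac) (h ▸ hdS2)
  have hdb : d ≠ b := fun h => (hnotS2 b hbS1 hbc) (h ▸ hdS2)
  have hea : e ≠ a := fun h => (hnotS2 a haS1 hac) (h ▸ heS2)
  have heb : e ≠ b := fun h => (hnotS2 b hbS1 hbc) (h ▸ heS2)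
  have hmem1 : ∀ v ∈ S1, v ∈ A' ∧ G.Adj v z1 := by
    intro v hv; rw [hSz1, Finset.mem_filter] at hv; exact ⟨hv.1, hv.2.symm⟩
  have hmem2 : ∀ v ∈ S2, v ∈ A' ∧ G.Adj v z2 := by
    intro v hv; rw [hSz2, Finset.mem_filter] at hv; exact ⟨hv.1, hv.2.symm⟩
  have hcA : c ∈ A' := (hmem1 c hcS1).1
  obtain ⟨y, hcy, hyx⟩ := common_nbr hconn hdiam (hA'R c hcA).2 (hA'R c hcA).1
  have hyne : ∀ v, v ∈ A' → y ≠ v := fun v hv h => (hA'R v hv).1 (h ▸ hyx)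
  have hz1ne : ∀ v, v ∈ A' → z1 ≠ v := fun v hv h => hz1A (h ▸ hv)
  have hz2ne : ∀ v, v ∈ A' → z2 ≠ v := fun v hv h => hz2A (h ▸ hv)
  have hsub : ({a, b, c, d, e} : Finset V) ⊆ A' := by
    intro v hv
    rcases mem_insert.mp hv with rfl | hv
    · exact (hmem1 v haS1).1
    · rcases mem_insert.mp hv with rfl | hv
      · exact (hmem1 v hbS1).1
      · rcases mem_insert.mp hv with rfl | hv
        · exact hcA
        · rcases mem_insert.mp hv with rfl | hv
          · exact (hmem2 v hdS2).1
          · exact (mem_singleton.mp hv) ▸ (hmem2 e heS2).1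
  have haA : a ∈ A' := (hmem1 a haS1).1
  have hbA : b ∈ A' := (hmem1 b hbS1).1
  have hdA : d ∈ A' := (hmem2 d hdS2).1
  have heA : e ∈ A' := (hmem2 e heS2).1
  refine hforbid {a, b, c, d, e} hsub (card_le_five a b c d e)
    (del_five hab hde hda hdb hea heb (Ne.symm hac) (Ne.symm hbc)
      (Ne.symm hdc) (Ne.symm hec)
      (hz1ne a haA) (hz1ne b hbA) (hz1ne c hcA) (hz1ne d hdA) (hz1ne e heA)
      (hz2ne a haA) (hz2ne b hbA) (hz2ne c hcA) (hz2ne d hdA) (hz2ne e heA) hz12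
      (hmem1 a haS1).2 (hmem1 b hbS1).2 (hmem1 c hcS1).2
      (hmem2 c hcS2).2 (hmem2 d hdS2).2 (hmem2 e heS2).2
      hcy hyx (hyne a (hsub (by simp))) (hyne b (hsub (by simp)))
      (hyne d (hsub (by simp))) (hyne e (hsub (by simp))))

lemma two_choose_two (n : ℕ) : 2 * n.choose 2 = n * (n - 1) := by
  rw [Nat.choose_two_right]
  have h : 2 ∣ n * (n - 1) := by
    rcases n with _ | k
    · simp
    · simpa [Nat.add_sub_cancel, Nat.mul_comm] using (Nat.even_mul_succ_self k).two_dvd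
  omega

lemma assemble {V : Type*} [Fintype V] [DecidableEq V] (x : V) (N A' W Z : Finset V)
    (hxN : x ∉ N) (hxA : x ∉ A') (hxW : x ∉ W) (hxZ : x ∉ Z)
    (hNA : Disjoint N A') (hNW : Disjoint N W) (hNZ : Disjoint N Z)
    (hAW : Disjoint A' W) (hAZ : Disjoint A' Z) (hWZ : Disjoint W Z) :
    1 + N.card + A'.card + W.card + Z.card ≤ Fintype.card V := by
  have h1 : Disjoint (N ∪ A') W := Finset.disjoint_union_left.mpr ⟨hNW, hAW⟩
  have h2 : Disjoint (N ∪ A' ∪ W) Z :=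
    Finset.disjoint_union_left.mpr ⟨Finset.disjoint_union_left.mpr ⟨hNZ, hAZ⟩, hWZ⟩
  have hcard : (N ∪ A' ∪ W ∪ Z).card = N.card + A'.card + W.card + Z.card := by
    rw [Finset.card_union_of_disjoint h2, Finset.card_union_of_disjoint h1,
      Finset.card_union_of_disjoint hNA]
  have hx : x ∉ N ∪ A' ∪ W ∪ Z := by
    simp only [mem_union, not_or]
    exact ⟨⟨⟨hxN, hxA⟩, hxW⟩, hxZ⟩
  calc 1 + N.card + A'.card + W.card + Z.card
      = (insert x (N ∪ A' ∪ W ∪ Z)).card := by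
        rw [Finset.card_insert_of_notMem hx, hcard]; omega
  _ ≤ (Finset.univ : Finset V).card := card_le_card (subset_univ _)
  _ = Fintype.card V := rfl
end RubblingAux

open RubblingAux in
/-- Let `G` be a connected graph of diameter 2 with goal vertex `x`, and let `p` be a
pebble distribution of size `m ≥ 5`.  If `x` is not reachable from `p`, then `G` has
at least `⌊((m - 5)² + 3)/2⌋` vertices. -/
theorem card_ge_of_not_reachable {V : Type*} [Fintype V] (G : SimpleGraph V)
    (hconn : G.Connected) (hdiam : G.diam = 2) (x : V) (p : V → ℕ) (m : ℕ)
    (hm : ∑ v, p v = m) (hm5 : 5 ≤ m) (hx : ¬ RubblingReachable G p x) :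
    ((m - 5) ^ 2 + 3) / 2 ≤ Fintype.card V := by
  classical
  set t := m - 5 with ht
  have hpx : p x = 0 := by
    by_contra h
    exact hx ⟨p, Relation.ReflTransGen.refl, by omega⟩
  set N := G.neighborFinset x with hN
  have hxN : x ∉ N := by simp [hN]
  have hNadj : ∀ y ∈ N, G.Adj y x := by
    intro y hy; rw [hN, SimpleGraph.mem_neighborFinset] at hy; exact hy.symm
  have hNval : ∀ y, G.Adj y x → p y ≤ 1 := by
    intro y hy; by_contra h; exact hx (reach_two hy (by omega))
  have hNuniq : ∀ y y', G.Adj y x → G.Adj y' x → 1 ≤ p y → 1 ≤ p y' → y = y' := by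
    intro y y' h1 h2 h3 h4; by_contra h
    exact hx (reach_one_one h h1 h2 h3 h4)
  have hbigR : ∀ u, 2 ≤ p u → ¬ G.Adj u x ∧ u ≠ x := by
    intro u hu
    constructor
    · intro h; exact hx (reach_two h hu)
    · intro h; rw [h] at hu; omega
  have hcn : ∀ v, v ≠ x → ¬ G.Adj v x → ∃ y, G.Adj v y ∧ G.Adj y x :=
    fun v h1 h2 => common_nbr hconn hdiam h1 h2
  set A := Finset.univ.filter (fun v => p v = 1 ∧ ¬ G.Adj v x ∧ v ≠ x) with hA
  have hAmem : ∀ a ∈ A, p a = 1 ∧ ¬ G.Adj a x ∧ a ≠ x := by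
    intro a ha; rw [hA, Finset.mem_filter] at ha; exact ha.2
  have hAR : ∀ a ∈ A, ¬ G.Adj a x ∧ a ≠ x := fun a ha => (hAmem a ha).2
  have hApeb : ∀ S : Finset V, S ⊆ A → ∀ s ∈ S, 1 ≤ p s :=
    fun S hS s hs => le_of_eq ((hAmem s (hS hs)).1).symm
  have hAnoadj : ∀ S : Finset V, S ⊆ A → ∀ s ∈ S, ¬ G.Adj s x :=
    fun S hS s hs => (hAmem s (hS hs)).2.1
  have hAx : x ∉ A := fun h => (hAmem x h).2.2 rfl
  have hNA : Disjoint N A :=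
    Finset.disjoint_left.mpr (fun v hv hva => (hAmem v hva).2.1 (hNadj v hv))
  have hkm : A.card ≤ m := by
    have hkA : ∑ v ∈ A, p v = A.card := by
      rw [Finset.sum_congr rfl (fun a ha => (hAmem a ha).1)]
      simp
    rw [← hm, ← hkA]
    exact Finset.sum_le_sum_of_subset (subset_univ A)
  have hgoal : t * t + 3 ≤ 2 * Fintype.card V + 1 → ((m - 5) ^ 2 + 3) / 2 ≤ Fintype.card V := by
    intro h
    have hsq : (m - 5) ^ 2 = t * t := by rw [ht, pow_two]
    omega
  apply hgoal
  have hcard1 : 1 ≤ Fintype.card V := Fintype.card_pos_iff.mpr ⟨x⟩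
  by_cases ht0 : t = 0
  · rw [ht0]; omega
  have ht1 : 1 ≤ t := by omega
  -- size bound helper
  have hmb : ∀ (c : ℕ) (w : V), (∀ v, v ∉ A → v ≠ w → p v = 0) → p w ≤ c →
      m ≤ A.card + c := by
    intro c w hzero hwc
    calc m = ∑ v, p v := hm.symm
    _ ≤ ∑ v, ((if v ∈ A then 1 else 0) + (if v = w then c else 0)) := by
        apply Finset.sum_le_sum
        intro v _
        by_cases hv1 : v ∈ A
        · have h1 := (hAmem v hv1).1
          by_cases hv2 : v = w
          · rw [if_pos hv1, if_pos hv2]; omega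
          · rw [if_pos hv1, if_neg hv2]; omega
        · by_cases hv2 : v = w
          · rw [if_neg hv1, if_pos hv2, hv2]; omega
          · rw [hzero v hv1 hv2]; omega
    _ = A.card + c := by
        rw [Finset.sum_add_distrib]
        congr 1
        · rw [Finset.sum_ite_mem, Finset.univ_inter]
          simp
        · rw [Finset.sum_ite_eq' Finset.univ w (fun _ => c)]
          simp
  by_cases hbig : ∃ u, 2 ≤ p u
  · -- CASE U : a vertex with at least 2 pebbles
    obtain ⟨u₀, hu₀⟩ := hbig
    obtain ⟨hu₀adj, hu₀x⟩ := hbigR u₀ hu₀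
    obtain ⟨yu, hyu1, hyu2⟩ := hcn u₀ hu₀x hu₀adj
    have hNzero : ∀ y, G.Adj y x → p y = 0 := by
      intro y hy
      by_contra h
      have hyu₀ : y ≠ u₀ := fun hh => hu₀adj (hh ▸ hy)
      have hs : Sends G p (movep p u₀ yu) := sends_movep hyu1 hu₀
      have h1 : movep p u₀ yu yu = p yu + 1 := by simp [movep, hyu1.ne, hyu1.ne']
      refine hx (reach_of_sends hs ?_)
      by_cases hyy : y = yu
      · refine reach_two hyu2 ?_
        rw [h1, ← hyy]
        omega
      · refine reach_one_one hyy hy hyu2 ?_ ?_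
        · have h2 : movep p u₀ yu y = p y := by simp [movep, hyu₀, hyy]
          omega
        · omega
    have hbiguniq : ∀ u, 2 ≤ p u → u = u₀ := by
      intro u hu
      by_contra hne
      obtain ⟨hub, hux⟩ := hbigR u hu
      obtain ⟨yu', h1, h2⟩ := hcn u hux hub
      exact hx (reach_two_bigs hne hu hu₀ h1 h2 hyu1 hyu2 hu₀adj)
    have hu₀3 : p u₀ ≤ 3 := by
      by_contra h
      exact hx (reach_big4 (by omega) hyu1 hyu2)
    have hu₀A : u₀ ∉ A := fun h => by have := (hAmem u₀ h).1; omega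
    have hforbid : ∀ S : Finset V, S ⊆ A → S.card ≤ 5 → Del G x S → False := by
      intro S hS _ hDel
      refine hx (reach_big_del hu₀ hyu1 hyu2 hDel (hAnoadj S hS) ?_ (hApeb S hS))
      intro h; exact hu₀A (hS h)
    have hmk : m ≤ A.card + 3 := by
      refine hmb 3 u₀ ?_ hu₀3
      intro v hv1 hv2
      by_cases hvx : v = x
      · rw [hvx]; exact hpx
      · by_cases hvadj : G.Adj v x
        · exact hNzero v hvadj
        · have h2 : p v < 2 := by
            by_contra hh
            exact hv2 (hbiguniq v (by omega))
          have h1 : p v ≠ 1 := by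
            intro hh
            exact hv1 (by rw [hA, Finset.mem_filter]; exact ⟨mem_univ v, hh, hvadj, hvx⟩)
          omega
    have hN2 := disch_N2 hforbid
    have hdeg := disch_deg hconn hdiam hAR hforbid
    have h4 := disch_4 hconn hdiam hAR hforbid
    have h6 := disch_6 hconn hdiam hAR hforbid
    obtain ⟨Z, hZprop, hZineq⟩ := master_count hconn hdiam x A {u₀} hAR hN2 hdeg h4 h6
    have hNge : A.card ≤ N.card := by
      rw [hN]
      exact N_large hconn hdiam x A hAR hN2
    have htotal : 1 + N.card + A.card + ({u₀} : Finset V).card + Z.card ≤ Fintype.card V := by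
      refine assemble x N A {u₀} Z hxN hAx (by simp [Ne.symm hu₀x])
        (fun h => (hZprop x h).2.2.1 rfl) hNA
        (Finset.disjoint_singleton_right.mpr (fun h => hu₀adj (hNadj u₀ h)))
        (Finset.disjoint_right.mpr (fun z hz => fun hzn => (hZprop z hz).2.2.2 (hNadj z hzn)))
        (Finset.disjoint_singleton_right.mpr hu₀A)
        (Finset.disjoint_right.mpr (fun z hz => (hZprop z hz).1))
        (Finset.disjoint_right.mpr (fun z hz => (hZprop z hz).2.1))
    have hc2 := two_choose_two A.card
    have hk : t + 2 ≤ A.card := by omega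
    have hprod : (t + 2) * (t + 1) ≤ A.card * (A.card - 1) :=
      Nat.mul_le_mul hk (by omega)
    have hexp : (t + 2) * (t + 1) = t * t + 3 * t + 2 := by ring
    have hW1 : ({u₀} : Finset V).card = 1 := card_singleton u₀
    omega
  · by_cases hyN : ∃ y, G.Adj y x ∧ 1 ≤ p y
    · -- CASE Y : a pebble on a neighbour of x
      push_neg at hbig
      obtain ⟨y₀, hy₀adj, hy₀p⟩ := hyN
      have hforbid : ∀ S : Finset V, S ⊆ A → S.card ≤ 5 → Del G x S → False :=
        fun S hS _ hDel =>
          hx (reach_of_pebbleN_del hy₀adj hy₀p hDel (hAnoadj S hS) (hApeb S hS))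
      have hmk : m ≤ A.card + 1 := by
        refine hmb 1 y₀ ?_ (hNval y₀ hy₀adj)
        intro v hv1 hv2
        by_cases hvx : v = x
        · rw [hvx]; exact hpx
        · by_cases hvadj : G.Adj v x
          · by_contra h
            exact hv2 (hNuniq v y₀ hvadj hy₀adj (by omega) hy₀p)
          · have h2 : p v < 2 := hbig v
            have h1 : p v ≠ 1 := by
              intro hh
              exact hv1 (by rw [hA, Finset.mem_filter]; exact ⟨mem_univ v, hh, hvadj, hvx⟩)
            omega
      have hN2 := disch_N2 hforbid
      have hdeg := disch_deg hconn hdiam hAR hforbid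
      have h4 := disch_4 hconn hdiam hAR hforbid
      have h6 := disch_6 hconn hdiam hAR hforbid
      obtain ⟨Z, hZprop, hZineq⟩ := master_count hconn hdiam x A ∅ hAR hN2 hdeg h4 h6
      have hNge : A.card ≤ N.card := by
        rw [hN]
        exact N_large hconn hdiam x A hAR hN2
      have htotal : 1 + N.card + A.card + (∅ : Finset V).card + Z.card ≤ Fintype.card V := by
        refine assemble x N A ∅ Z hxN hAx (notMem_empty x)
          (fun h => (hZprop x h).2.2.1 rfl) hNA (Finset.disjoint_empty_right N)
          (Finset.disjoint_right.mpr (fun z hz => fun hzn => (hZprop z hz).2.2.2 (hNadj z hzn)))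
          (Finset.disjoint_empty_right A)
          (Finset.disjoint_right.mpr (fun z hz => (hZprop z hz).1))
          (Finset.disjoint_empty_left Z)
      have hc2 := two_choose_two A.card
      have hk : t + 4 ≤ A.card := by omega
      have hprod : (t + 4) * (t + 3) ≤ A.card * (A.card - 1) :=
        Nat.mul_le_mul hk (by omega)
      have hexp : (t + 4) * (t + 3) = t * t + 7 * t + 12 := by ring
      have hW0 : (∅ : Finset V).card = 0 := card_empty
      omega
    · -- CASE Z : all pebbles are single pebbles on A
      push_neg at hbig hyN
      have hmk : m ≤ A.card := by
        have := hmb 0 x ?_ (le_of_eq hpx)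
        · omega
        · intro v hv1 hv2
          by_cases hvadj : G.Adj v x
          · have := hyN v hvadj; omega
          · have h2 : p v < 2 := hbig v
            have h1 : p v ≠ 1 := by
              intro hh
              exact hv1 (by rw [hA, Finset.mem_filter]; exact ⟨mem_univ v, hh, hvadj, hv2⟩)
            omega
      have hkeq : A.card = m := le_antisymm hkm hmk
      set Dfam := A.powerset.filter (fun S => S.card ≤ 5 ∧ Del G x S) with hDfam
      by_cases hDne : Dfam.Nonempty
      · obtain ⟨D₀, hD₀mem, hD₀min⟩ := Finset.exists_min_image Dfam card hDne
        have hD₀sub : D₀ ⊆ A := Finset.mem_powerset.mp (Finset.mem_filter.mp hD₀mem).1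
        have hD₀Del : Del G x D₀ := (Finset.mem_filter.mp hD₀mem).2.2
        have hd₀5 : D₀.card ≤ 5 := (Finset.mem_filter.mp hD₀mem).2.1
        set A' := A \ D₀ with hA'
        have hA'sub : A' ⊆ A := sdiff_subset
        have hA'R : ∀ a ∈ A', ¬ G.Adj a x ∧ a ≠ x := fun a ha => hAR a (hA'sub ha)
        have hk' : A'.card = A.card - D₀.card := card_sdiff_of_subset hD₀sub
        have hforbid' : ∀ S : Finset V, S ⊆ A' → S.card ≤ 5 → Del G x S → False := by
          intro S hS _ hDel
          refine hx (reach_two_dels hD₀Del hDel ?_ (hAnoadj D₀ hD₀sub)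
            (hAnoadj S (hS.trans hA'sub)) ?_)
          · exact Finset.disjoint_right.mpr (fun v hv => (Finset.mem_sdiff.mp (hS hv)).2)
          · intro s hs
            rcases Finset.mem_union.mp hs with h | h
            · exact hApeb D₀ hD₀sub s h
            · exact hApeb S (hS.trans hA'sub) s h
        have hN2' := disch_N2 hforbid'
        have hdeg' := disch_deg hconn hdiam hA'R hforbid'
        have h4' := disch_4 hconn hdiam hA'R hforbid'
        have h6' := disch_6 hconn hdiam hA'R hforbid'
        by_cases h3 : 3 ≤ D₀.card
        · -- N-injection on the whole of A via minimality
          have hN2A : ∀ y, G.Adj y x → ∀ a ∈ A, ∀ b ∈ A, G.Adj a y → G.Adj b y → a = b := by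
            intro y hy a ha b hb h1 h2
            by_contra hab
            have hDel := del_pair hab h1 h2 hy
            have hmem : ({a, b} : Finset V) ∈ Dfam := by
              rw [hDfam, Finset.mem_filter]
              refine ⟨Finset.mem_powerset.mpr ?_, le_trans (card_le_two' a b) (by omega), hDel⟩
              intro z hz
              rcases mem_insert.mp hz with rfl | hz
              · exact ha
              · exact (mem_singleton.mp hz) ▸ hb
            have hle := hD₀min _ hmem
            have := card_le_two' a b
            omega
          have hNge : A.card ≤ N.card := by
            rw [hN]
            exact N_large hconn hdiam x A hAR hN2A
          by_cases h4'' : 4 ≤ D₀.card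
          · -- W = ∅
            obtain ⟨Z, hZprop, hZineq⟩ := master_count hconn hdiam x A' ∅ hA'R hN2' hdeg' h4' h6'
            have htotal : 1 + N.card + A'.card + (∅ : Finset V).card + Z.card ≤ Fintype.card V := by
              refine assemble x N A' ∅ Z hxN (fun h => hAx (hA'sub h)) (notMem_empty x)
                (fun h => (hZprop x h).2.2.1 rfl)
                (Disjoint.mono_right hA'sub hNA) (Finset.disjoint_empty_right N)
                (Finset.disjoint_right.mpr (fun z hz hzn => (hZprop z hz).2.2.2 (hNadj z hzn)))
                (Finset.disjoint_empty_right A')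
                (Finset.disjoint_right.mpr (fun z hz => (hZprop z hz).1))
                (Finset.disjoint_empty_left Z)
            have hc2 := two_choose_two A'.card
            have hkk : t ≤ A'.card := by omega
            have hprod : t * (t - 1) ≤ A'.card * (A'.card - 1) :=
              Nat.mul_le_mul hkk (by omega)
            have hexp : t * (t - 1) + t = t * t := by
              rcases t with _ | s
              · simp
              · simp [Nat.add_sub_cancel]; ring
            have hW0 : (∅ : Finset V).card = 0 := card_empty
            omega
          · -- D₀.card = 3, W = D₀
            obtain ⟨Z, hZprop, hZineq⟩ := master_count hconn hdiam x A' D₀ hA'R hN2' hdeg' h4' h6'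
            have htotal : 1 + N.card + A'.card + D₀.card + Z.card ≤ Fintype.card V := by
              refine assemble x N A' D₀ Z hxN (fun h => hAx (hA'sub h)) (fun h => hAx (hD₀sub h))
                (fun h => (hZprop x h).2.2.1 rfl)
                (Disjoint.mono_right hA'sub hNA) (Disjoint.mono_right hD₀sub hNA)
                (Finset.disjoint_right.mpr (fun z hz hzn => (hZprop z hz).2.2.2 (hNadj z hzn)))
                (Finset.disjoint_left.mpr (fun v hv => (Finset.mem_sdiff.mp hv).2))
                (Finset.disjoint_right.mpr (fun z hz => (hZprop z hz).1))
                (Finset.disjoint_right.mpr (fun z hz => (hZprop z hz).2.1))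
            have hc2 := two_choose_two A'.card
            have hd3 : D₀.card = 3 := by omega
            have hkk : t + 2 ≤ A'.card := by omega
            have hprod : (t + 2) * (t + 1) ≤ A'.card * (A'.card - 1) :=
              Nat.mul_le_mul hkk (by omega)
            have hexp : (t + 2) * (t + 1) = t * t + 3 * t + 2 := by ring
            omega
        · -- D₀.card ≤ 2, W = D₀, N-injection only on A'
          obtain ⟨Z, hZprop, hZineq⟩ := master_count hconn hdiam x A' D₀ hA'R hN2' hdeg' h4' h6'
          have hNge : A'.card ≤ N.card := by
            rw [hN]
            exact N_large hconn hdiam x A' hA'R hN2'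
          have htotal : 1 + N.card + A'.card + D₀.card + Z.card ≤ Fintype.card V := by
            refine assemble x N A' D₀ Z hxN (fun h => hAx (hA'sub h)) (fun h => hAx (hD₀sub h))
              (fun h => (hZprop x h).2.2.1 rfl)
              (Disjoint.mono_right hA'sub hNA) (Disjoint.mono_right hD₀sub hNA)
              (Finset.disjoint_right.mpr (fun z hz hzn => (hZprop z hz).2.2.2 (hNadj z hzn)))
              (Finset.disjoint_left.mpr (fun v hv => (Finset.mem_sdiff.mp hv).2))
              (Finset.disjoint_right.mpr (fun z hz => (hZprop z hz).1))
              (Finset.disjoint_right.mpr (fun z hz => (hZprop z hz).2.1))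
          have hc2 := two_choose_two A'.card
          have hd2 : D₀.card ≤ 2 := by omega
          have hkk : t + 3 ≤ A'.card := by omega
          have hprod : (t + 3) * (t + 2) ≤ A'.card * (A'.card - 1) :=
            Nat.mul_le_mul hkk (by omega)
          have hexp : (t + 3) * (t + 2) = t * t + 5 * t + 6 := by ring
          omega
      · -- no deliveries at all
        have hforbid : ∀ S : Finset V, S ⊆ A → S.card ≤ 5 → Del G x S → False := by
          intro S hS hc hDel
          apply hDne
          refine ⟨S, ?_⟩
          rw [hDfam, Finset.mem_filter]
          exact ⟨Finset.mem_powerset.mpr hS, hc, hDel⟩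
        have hN2 := disch_N2 hforbid
        have hdeg := disch_deg hconn hdiam hAR hforbid
        have h4 := disch_4 hconn hdiam hAR hforbid
        have h6 := disch_6 hconn hdiam hAR hforbid
        obtain ⟨Z, hZprop, hZineq⟩ := master_count hconn hdiam x A ∅ hAR hN2 hdeg h4 h6
        have hNge : A.card ≤ N.card := by
          rw [hN]
          exact N_large hconn hdiam x A hAR hN2
        have htotal : 1 + N.card + A.card + (∅ : Finset V).card + Z.card ≤ Fintype.card V := by
          refine assemble x N A ∅ Z hxN hAx (notMem_empty x)
            (fun h => (hZprop x h).2.2.1 rfl) hNA (Finset.disjoint_empty_right N)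
            (Finset.disjoint_right.mpr (fun z hz hzn => (hZprop z hz).2.2.2 (hNadj z hzn)))
            (Finset.disjoint_empty_right A)
            (Finset.disjoint_right.mpr (fun z hz => (hZprop z hz).1))
            (Finset.disjoint_empty_left Z)
        have hc2 := two_choose_two A.card
        have hkk : t + 5 ≤ A.card := by omega
        have hprod : (t + 5) * (t + 4) ≤ A.card * (A.card - 1) :=
          Nat.mul_le_mul hkk (by omega)
        have hexp : (t + 5) * (t + 4) = t * t + 9 * t + 20 := by ring
        have hW0 : (∅ : Finset V).card = 0 := card_empty
        omega
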